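/- Let ε > 0 and let E : ℝ × ℝ² → ℝ² be any map. Suppose X, V : ℝ → ℝ² are differentiable at a point t₀ and satisfy X'(t₀) = V(t₀)/ε and V'(t₀) = V(t₀)^⊥/ε² + E(t₀, X(t₀))/ε. Then the map Z := X + ε V^⊥ is differentiable at t₀ and Z'(t₀) = (E(t₀, X(t₀)))^⊥. -/

import Mathlib

/-- For `w = (w₁, w₂) ∈ ℝ²`, `perp w = (−w₂, w₁)`. -/
noncomputable def perp (w : EuclideanSpace ℝ (Fin 2)) : EuclideanSpace ℝ (Fin 2) :=
  !₂[-w 1, w 0]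

noncomputable def perpL : EuclideanSpace ℝ (Fin 2) →L[ℝ] EuclideanSpace ℝ (Fin 2) :=
  LinearMap.toContinuousLinearMap
    { toFun := perp
      map_add' := by
        intro a b; ext i; fin_cases i <;>
          simp [perp, PiLp.add_apply] <;> ring
      map_smul' := by
        intro c a; ext i; fin_cases i <;>
          simp [perp, PiLp.smul_apply] <;> ring }

lemma perpL_apply (w : EuclideanSpace ℝ (Fin 2)) : perpL w = perp w := rfl

lemma perp_perp (w : EuclideanSpace ℝ (Fin 2)) : perp (perp w) = -w := by
  ext i; fin_cases i <;> simp [perp]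

/-- If `X, V : ℝ → ℝ²` are differentiable at `t₀` with `X'(t₀) = V(t₀)/ε` and
`V'(t₀) = V(t₀)^⊥/ε² + E(t₀, X(t₀))/ε`, then `Z = X + ε V^⊥` is differentiable at `t₀`
with `Z'(t₀) = (E(t₀, X(t₀)))^⊥`. -/
theorem gyro_combination_ode (ε : ℝ) (hε : 0 < ε)
    (E : ℝ × EuclideanSpace ℝ (Fin 2) → EuclideanSpace ℝ (Fin 2))
    (X V : ℝ → EuclideanSpace ℝ (Fin 2)) (t₀ : ℝ)
    (hX : HasDerivAt X (ε⁻¹ • V t₀) t₀)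
    (hV : HasDerivAt V ((ε ^ 2)⁻¹ • perp (V t₀) + ε⁻¹ • E (t₀, X t₀)) t₀) :
    HasDerivAt (fun t => X t + ε • perp (V t)) (perp (E (t₀, X t₀))) t₀ := by
  have hperp : HasDerivAt (fun t => perp (V t))
      (perp ((ε ^ 2)⁻¹ • perp (V t₀) + ε⁻¹ • E (t₀, X t₀))) t₀ := by
    have := perpL.hasFDerivAt.comp_hasDerivAt t₀ hV
    exact this
  have h := hX.add ((hperp.const_smul ε))
  have key : ε⁻¹ • V t₀ + ε • perp ((ε ^ 2)⁻¹ • perp (V t₀) + ε⁻¹ • E (t₀, X t₀))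
      = perp (E (t₀, X t₀)) := by
    have hmap : ∀ a b : EuclideanSpace ℝ (Fin 2), ∀ c d : ℝ,
        perp (c • a + d • b) = c • perp a + d • perp b := by
      intro a b c d
      simp only [← perpL_apply, map_add, map_smul]
    rw [hmap, perp_perp, smul_add, smul_smul, smul_smul, smul_neg]
    have h1 : ε * (ε ^ 2)⁻¹ = ε⁻¹ := by field_simp
    have h2 : ε * ε⁻¹ = 1 := mul_inv_cancel₀ hε.ne'
    rw [h1, h2, one_smul]
    abel
  rw [key] at h
  exact h
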